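/- Let G be a countable discrete group which is the union of an increasing sequence of subgroups G_1 ≤ G_2 ≤ ⋯ ≤ G, and let Λ ≤ G be a subgroup. If for every N the pair (G_N, Λ ∩ G_N) has the Haagerup property from below, then the pair (G, Λ) has the Haagerup property from below. (The witnessing positive definite functions on G are obtained by extending positive definite functions on the subgroups G_N by zero off G_N.) -/

import Mathlib

open scoped ComplexOrder

/-- A function `φ : G → ℂ` is positive definite if for all `g_1, …, g_m ∈ G` and
`c_1, …, c_m ∈ ℂ` the sum `Σ_{i,j} c_i conj(c_j) φ(g_j⁻¹ g_i)` is a nonnegative real number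
(equivalently, it is `≥ 0` for the standard partial order on `ℂ`). -/
def IsPositiveDefinite {G : Type*} [Group G] (φ : G → ℂ) : Prop :=
  ∀ (m : ℕ) (g : Fin m → G) (c : Fin m → ℂ),
    0 ≤ ∑ i : Fin m, ∑ j : Fin m, c i * (starRingEnd ℂ) (c j) * φ ((g j)⁻¹ * g i)

/-- `f` is C0 on a subset `S` if for every `ε > 0` the set of elements of `S` where
`|f| ≥ ε` is finite. -/
def IsC0On {G : Type*} (f : G → ℂ) (S : Set G) : Prop :=
  ∀ ε : ℝ, 0 < ε → {g ∈ S | ε ≤ ‖f g‖}.Finite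

/-- A group `G` has the Haagerup property if there is a sequence of C0 positive definite
functions on `G` converging pointwise to `1`. -/
def HasHaagerup (G : Type*) [Group G] : Prop :=
  ∃ φ : ℕ → G → ℂ, (∀ n, IsPositiveDefinite (φ n)) ∧ (∀ n, IsC0On (φ n) Set.univ) ∧
    ∀ g : G, Filter.Tendsto (fun n => φ n g) Filter.atTop (nhds 1)

/-- The pair `(G, Λ)` has the Haagerup property from below if there is a sequence of positive
definite functions `ψ_n` on `G` with `|1 - ψ_n(g)| → 0` for every `g ∈ G`, each of which is C0
on `Λ`. -/
def HaagerupFromBelow {G : Type*} [Group G] (Λ : Subgroup G) : Prop :=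
  ∃ ψ : ℕ → G → ℂ, (∀ n, IsPositiveDefinite (ψ n)) ∧
    (∀ g : G, Filter.Tendsto (fun n => ‖1 - ψ n g‖) Filter.atTop (nhds 0)) ∧
    ∀ n, IsC0On (ψ n) (Λ : Set G)

lemma isPositiveDefinite_finset {H : Type*} [Group H] {φ : H → ℂ} (hφ : IsPositiveDefinite φ)
    {ι : Type*} (s : Finset ι) (g : ι → H) (c : ι → ℂ) :
    0 ≤ ∑ i ∈ s, ∑ j ∈ s, c i * (starRingEnd ℂ) (c j) * φ ((g j)⁻¹ * g i) := by
  classical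
  set e := s.equivFin with he
  have h1 : ∀ F : ι → ℂ, ∑ i ∈ s, F i = ∑ a : Fin s.card, F (e.symm a) := by
    intro F
    rw [← Finset.sum_coe_sort s F, ← e.symm.sum_comp (fun i : {x // x ∈ s} => F i.1)]
  have h2 : (∑ i ∈ s, ∑ j ∈ s, c i * (starRingEnd ℂ) (c j) * φ ((g j)⁻¹ * g i))
      = ∑ a : Fin s.card, ∑ b : Fin s.card,
        c (e.symm a) * (starRingEnd ℂ) (c (e.symm b)) * φ ((g (e.symm b))⁻¹ * g (e.symm a)) := by
    rw [h1]
    exact Finset.sum_congr rfl fun a _ => h1 _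
  rw [h2]
  exact hφ s.card (fun a => g (e.symm a)) (fun a => c (e.symm a))

lemma isPositiveDefinite_extend {G : Type*} [Group G] (H : Subgroup G) [DecidablePred (· ∈ H)] (φ : ↥H → ℂ)
    (hφ : IsPositiveDefinite φ) :
    IsPositiveDefinite (fun g => if hg : g ∈ H then φ ⟨g, hg⟩ else 0) := by
  classical
  intro m g c
  set t : Fin m → Fin m → ℂ := fun i j =>
    c i * (starRingEnd ℂ) (c j) * (if hg : (g j)⁻¹ * g i ∈ H then φ ⟨(g j)⁻¹ * g i, hg⟩ else 0)
    with ht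
  show 0 ≤ ∑ i : Fin m, ∑ j : Fin m, t i j
  set k : Fin m → G ⧸ H := fun i => ((g i : G) : G ⧸ H) with hk
  have hkm : ∀ i j : Fin m, k j = k i ↔ (g j)⁻¹ * g i ∈ H := fun i j => QuotientGroup.eq
  have hzero : ∀ i j : Fin m, ¬ (k j = k i) → t i j = 0 := by
    intro i j hne
    simp only [ht]
    rw [dif_neg (fun hmem => hne ((hkm i j).mpr hmem)), mul_zero]
  have step1 : (∑ i : Fin m, ∑ j : Fin m, t i j)
      = ∑ p ∈ (Finset.univ ×ˢ Finset.univ).filter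
          (fun p : Fin m × Fin m => k p.2 = k p.1), t p.1 p.2 := by
    rw [← Finset.sum_product', Finset.sum_filter]
    refine Finset.sum_congr rfl fun p _ => ?_
    by_cases hp : k p.2 = k p.1
    · simp [hp]
    · simp [hp, hzero _ _ hp]
  set S := (Finset.univ ×ˢ Finset.univ).filter
      (fun p : Fin m × Fin m => k p.2 = k p.1) with hS
  have step2 : ∑ q ∈ Finset.univ.image k, ∑ p ∈ S.filter (fun p => k p.1 = q), t p.1 p.2
      = ∑ p ∈ S, t p.1 p.2 :=
    Finset.sum_fiberwise_of_maps_to (fun p _ => Finset.mem_image_of_mem k (Finset.mem_univ p.1)) _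
  rw [step1, ← step2]
  apply Finset.sum_nonneg
  intro q hq
  obtain ⟨i0, _, hi0⟩ := Finset.mem_image.mp hq
  have hfib : S.filter (fun p => k p.1 = q)
      = (Finset.univ.filter (fun i => k i = q)) ×ˢ (Finset.univ.filter (fun j => k j = q)) := by
    ext p
    simp only [hS, Finset.mem_filter, Finset.mem_product, Finset.mem_univ, true_and]
    constructor
    · rintro ⟨hp2, hp1⟩; exact ⟨hp1, hp2.trans hp1⟩
    · rintro ⟨hp1, hp2⟩; exact ⟨hp2.trans hp1.symm, hp1⟩
  rw [hfib, Finset.sum_product']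
  -- block positivity
  set F := Finset.univ.filter (fun i : Fin m => k i = q) with hF
  have hmemF : ∀ i ∈ F, (g i0)⁻¹ * g i ∈ H := by
    intro i hi
    have : k i0 = k i := hi0.trans ((Finset.mem_filter.mp hi).2).symm
    exact (hkm i i0).mp this
  set g' : Fin m → ↥H := fun i =>
    if hgi : (g i0)⁻¹ * g i ∈ H then (⟨(g i0)⁻¹ * g i, hgi⟩ : ↥H) else 1 with hg'
  have key : ∀ i ∈ F, ∀ j ∈ F, t i j = c i * (starRingEnd ℂ) (c j) * φ ((g' j)⁻¹ * g' i) := by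
    intro i hi j hj
    have hi' := hmemF i hi
    have hj' := hmemF j hj
    have hij : (g j)⁻¹ * g i ∈ H := by
      have := mul_mem (inv_mem hj') hi'
      have heq : ((g i0)⁻¹ * g j)⁻¹ * ((g i0)⁻¹ * g i) = (g j)⁻¹ * g i := by group
      rwa [heq] at this
    simp only [ht]
    rw [dif_pos hij]
    congr 1
    apply congrArg
    apply Subtype.ext
    simp only [hg', dif_pos hi', dif_pos hj']
    show (g j)⁻¹ * g i = ((g i0)⁻¹ * g j)⁻¹ * ((g i0)⁻¹ * g i)
    group
  calc (0:ℂ) ≤ ∑ i ∈ F, ∑ j ∈ F, c i * (starRingEnd ℂ) (c j) * φ ((g' j)⁻¹ * g' i) :=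
        isPositiveDefinite_finset hφ F g' c
    _ = ∑ i ∈ F, ∑ j ∈ F, t i j := by
        refine Finset.sum_congr rfl fun i hi => Finset.sum_congr rfl fun j hj => ?_
        exact (key i hi j hj).symm

/-- If a countable discrete group `G` is the union of an increasing sequence
of subgroups `G_1 ≤ G_2 ≤ ⋯` and `Λ ≤ G` is a subgroup such that each pair `(G_N, Λ ∩ G_N)`
has the Haagerup property from below, then the pair `(G, Λ)` has the Haagerup property from
below. -/
theorem haagerupFromBelow_of_increasing_union
    (G : Type*) [Group G] [Countable G]
    (Gn : ℕ → Subgroup G) (hmono : Monotone Gn)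
    (hunion : ∀ g : G, ∃ N, g ∈ Gn N)
    (Λ : Subgroup G)
    (h : ∀ N, HaagerupFromBelow (Λ.subgroupOf (Gn N))) :
    HaagerupFromBelow Λ := by
  classical
  obtain ⟨f, hf⟩ := exists_surjective_nat G
  choose Nk hNk using hunion
  set N : ℕ → ℕ := fun n => (Finset.range (n+1)).sup (fun k => Nk (f k)) with hNdef
  have hfN : ∀ n k, k ≤ n → f k ∈ Gn (N n) := by
    intro n k hkn
    exact hmono (Finset.le_sup (f := fun k => Nk (f k))
      (Finset.mem_range.mpr (Nat.lt_succ_of_le hkn))) (hNk (f k))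
  choose φ hpd htend hc0 using h
  have hev : ∀ n : ℕ, ∀ᶠ M in Filter.atTop,
      ∀ k : Fin (n+1),
        ‖1 - φ (N n) M ⟨f k, hfN n k (Nat.lt_succ_iff.mp k.2)⟩‖ < 1/(n+1) := by
    intro n
    rw [Filter.eventually_all]
    intro k
    exact (htend (N n) ⟨f k, hfN n k (Nat.lt_succ_iff.mp k.2)⟩).eventually_lt_const
      (by positivity)
  choose m hm using fun n => (hev n).exists
  set ψ : ℕ → G → ℂ := fun n g =>
    if hg : g ∈ Gn (N n) then φ (N n) (m n) ⟨g, hg⟩ else 0 with hψ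
  refine ⟨ψ, fun n => isPositiveDefinite_extend _ _ (hpd _ _), ?_, ?_⟩
  · intro g
    obtain ⟨k, rfl⟩ := hf g
    apply squeeze_zero' (Filter.Eventually.of_forall fun n => norm_nonneg _)
      ?_ tendsto_one_div_add_atTop_nhds_zero_nat
    filter_upwards [Filter.eventually_ge_atTop k] with n hn
    have hk : f k ∈ Gn (N n) := hfN n k hn
    have hval : ψ n (f k) = φ (N n) (m n) ⟨f k, hk⟩ := dif_pos hk
    rw [hval]
    exact le_of_lt (hm n ⟨k, Nat.lt_succ_of_le hn⟩)
  · intro n ε hε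
    have hfin := hc0 (N n) (m n) ε hε
    have hsub : {g ∈ (Λ : Set G) | ε ≤ ‖ψ n g‖} ⊆
        Subtype.val '' {x ∈ ((Λ.subgroupOf (Gn (N n))) : Set (Gn (N n))) |
          ε ≤ ‖φ (N n) (m n) x‖} := by
      rintro g ⟨hgΛ, hgε⟩
      by_cases hg : g ∈ Gn (N n)
      · refine ⟨⟨g, hg⟩, ⟨Subgroup.mem_subgroupOf.mpr hgΛ, ?_⟩, rfl⟩
        rwa [show ψ n g = φ (N n) (m n) ⟨g, hg⟩ from dif_pos hg] at hgε
      · exfalso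
        rw [show ψ n g = 0 from dif_neg hg] at hgε
        simp at hgε
        linarith
    exact ((hfin.image _)).subset hsub
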